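/- There exists a constant c > 0 such that for all Schwartz vector fields u, v, w : ℝ³ → ℝ³, |∫_{ℝ³} ⟨(u·∇)v(x), w(x)⟩ dx| ≤ c · (∫_{ℝ³} (‖u(x)‖² + ‖Du(x)‖²) dx)^{1/2} · (∫_{ℝ³} (‖v(x)‖² + ‖Dv(x)‖² + ‖D²v(x)‖²) dx)^{1/2} · (∫_{ℝ³} ‖w(x)‖² dx)^{1/2}. -/

import Mathlib

open MeasureTheory
open scoped RealInnerProductSpace

section Stmt13Aux

open Filter ENNReal
open scoped NNReal
set_option maxHeartbeats 1000000 in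
theorem _dummy_heartbeat : True := trivial
set_option maxHeartbeats 1000000

noncomputable section
abbrev E3 := EuclideanSpace ℝ (Fin 3)

-- second derivative norm
lemma norm_fderiv_fderiv (f : E3 → E3) (x : E3) :
    ‖fderiv ℝ (fderiv ℝ f) x‖ = ‖iteratedFDeriv ℝ 2 f x‖ := by
  rw [← norm_iteratedFDeriv_fderiv (n := 1)]
  rw [← norm_fderiv_iteratedFDeriv (n := 0)]
  rw [iteratedFDeriv_zero_eq_comp]
  rw [LinearIsometryEquiv.comp_fderiv']
  simp only [LinearIsometryEquiv.coe_coe]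
  rw [show ((continuousMultilinearCurryFin0 ℝ E3 (E3 →L[ℝ] E3)).symm : (E3 →L[ℝ] E3) →L[ℝ] _) =
    (continuousMultilinearCurryFin0 ℝ E3 (E3 →L[ℝ] E3)).symm.toLinearIsometry.toContinuousLinearMap from rfl]
  rw [LinearIsometry.norm_toContinuousLinearMap_comp]

variable {F : Type} [NormedAddCommGroup F] [NormedSpace ℝ F]

-- integrability of the square of a Schwartz function
lemma schwartz_sq_integrable (f : SchwartzMap E3 F) :
    Integrable (fun x => ‖f x‖ ^ 2) (volume : Measure E3) := by
  have hb : ∀ x, ‖f x‖ ≤ (SchwartzMap.seminorm ℝ 0 0) f := f.norm_le_seminorm ℝ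
  refine Integrable.mono' ((f.integrable (μ := volume)).norm.const_mul
    ((SchwartzMap.seminorm ℝ 0 0) f)) ?_ ?_
  · exact (f.continuous.norm.pow 2).aestronglyMeasurable
  · refine Eventually.of_forall fun x => ?_
    have h0 : (0:ℝ) ≤ ‖f x‖ := norm_nonneg _
    have := hb x
    rw [Real.norm_of_nonneg (by positivity)]
    calc ‖f x‖ ^ 2 = ‖f x‖ * ‖f x‖ := sq ..
      _ ≤ (SchwartzMap.seminorm ℝ 0 0) f * ‖f x‖ := by
          exact mul_le_mul_of_nonneg_right (hb x) h0

lemma schwartz_lintegral_sq_lt_top (f : SchwartzMap E3 F) :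
    ∫⁻ x, ((‖f x‖₊ : ℝ≥0∞)) ^ (2:ℝ) ∂(volume : Measure E3) < ⊤ := by
  have h := (schwartz_sq_integrable f).lintegral_lt_top
  refine lt_of_eq_of_lt ?_ h
  congr 1
  funext x
  rw [ENNReal.ofReal_pow (norm_nonneg _), ofReal_norm, enorm_eq_nnnorm]
  rw [← ENNReal.rpow_natCast]
  norm_num

lemma lintegral_sq_toReal (f : E3 → F) (hf : Continuous f)
    (hi : Integrable (fun x => ‖f x‖ ^ 2) (volume : Measure E3)) :
    (∫⁻ x, ((‖f x‖₊ : ℝ≥0∞)) ^ (2:ℝ) ∂(volume : Measure E3)).toReal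
      = ∫ x, ‖f x‖ ^ 2 ∂(volume : Measure E3) := by
  rw [MeasureTheory.integral_eq_lintegral_of_nonneg_ae (f := fun x => ‖f x‖ ^ 2)
    (Eventually.of_forall fun x => by positivity) (hf.norm.pow 2).aestronglyMeasurable]
  congr 1
  apply lintegral_congr fun x => ?_
  rw [ENNReal.ofReal_pow (norm_nonneg _), ofReal_norm, enorm_eq_nnnorm, ← ENNReal.rpow_natCast]
  norm_num


variable {F : Type} [NormedAddCommGroup F] [NormedSpace ℝ F] [FiniteDimensional ℝ F]

lemma gns6 : ∃ C : ℝ≥0∞, C ≠ ⊤ ∧ ∀ f : SchwartzMap E3 F,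
    eLpNorm (⇑f) 6 (volume : Measure E3) ≤
      C * (eLpNorm (⇑f) 2 volume + eLpNorm (fderiv ℝ ⇑f) 2 volume) := by
  classical
  set φ : ContDiffBump (0 : E3) := ⟨1, 2, one_pos, one_lt_two⟩ with hφdef
  obtain ⟨M, hM⟩ := (φ.hasCompactSupport.fderiv ℝ).exists_bound_of_continuous
    ((φ.contDiff (n := 1)).continuous_fderiv (by simp))
  have hM0 : 0 ≤ M := le_trans (norm_nonneg _) (hM 0)
  set C₀ : ℝ≥0∞ := (SNormLESNormFDerivOfEqConst F (volume : Measure E3) 2 : ℝ≥0∞) with hC₀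
  refine ⟨C₀ * (1 + ENNReal.ofReal M), by finiteness, fun f => ?_⟩
  set a := eLpNorm (⇑f) 2 (volume : Measure E3)
  set b := eLpNorm (fderiv ℝ ⇑f) 2 (volume : Measure E3)
  set R : ℝ≥0∞ := C₀ * (1 + ENNReal.ofReal M) * (a + b) with hR
  -- the cutoff functions
  set c : ℕ → ℝ := fun n => ((n : ℝ) + 1)⁻¹ with hc
  have hc0 : ∀ n, 0 < c n := fun n => by positivity
  have hc1 : ∀ n, c n ≤ 1 := fun n => by
    rw [hc]; simp only []
    rw [inv_le_one_iff₀]; right; linarith [Nat.cast_nonneg (α := ℝ) n]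
  set g : ℕ → E3 → F := fun n x => φ (c n • x) • f x with hg
  -- bound on each g n
  have key : ∀ n, eLpNorm (g n) 6 volume ≤ R := by
    intro n
    have hχdiff : Differentiable ℝ (fun x : E3 => φ (c n • x)) :=
      (φ.contDiff (n := 1)).differentiable (by simp) |>.comp
        (differentiable_id.const_smul (c n))
    have hgc : ContDiff ℝ 1 (g n) := by
      refine ContDiff.smul ?_ (f.smooth 1)
      exact (φ.contDiff (n := 1)).comp (contDiff_id.const_smul (c n))
    have hgs : HasCompactSupport (g n) := by
      refine HasCompactSupport.intro (isCompact_closedBall (0:E3) ((2:ℝ)/(c n))) ?_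
      intro x hx
      have hxn : (2:ℝ)/(c n) < ‖x‖ := by
        simpa [dist_eq_norm] using lt_of_not_ge (fun h => hx (by simpa [Metric.mem_closedBall, dist_eq_norm] using h))
      have : φ (c n • x) = 0 := by
        apply φ.zero_of_le_dist
        have : φ.rOut = 2 := rfl
        rw [this]
        rw [dist_eq_norm, sub_zero, norm_smul, Real.norm_of_nonneg (hc0 n).le]
        rw [div_lt_iff₀ (hc0 n)] at hxn
        linarith [hxn]
      simp [hg, this]
    -- GNS for compactly supported functions
    have hgns := MeasureTheory.eLpNorm_le_eLpNorm_fderiv_of_eq (F := F)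
      (volume : Measure E3) hgc hgs (p := 2) (p' := 6) (by norm_num)
      (by simp [finrank_euclideanSpace]) (by
        rw [finrank_euclideanSpace]
        norm_num)
    -- pointwise derivative bound
    have hd : ∀ x, ‖fderiv ℝ (g n) x‖ ≤ ‖fderiv ℝ (⇑f) x‖ + M * ‖f x‖ := by
      intro x
      have hsmul : fderiv ℝ (g n) x = φ (c n • x) • fderiv ℝ (⇑f) x +
          (fderiv ℝ (fun y : E3 => φ (c n • y)) x).smulRight (f x) :=
        fderiv_smul (hχdiff x) f.differentiableAt
      have hχd : ‖fderiv ℝ (fun y : E3 => φ (c n • y)) x‖ ≤ M := by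
        have hL : HasFDerivAt (fun y : E3 => c n • y) (c n • ContinuousLinearMap.id ℝ E3) x :=
          (hasFDerivAt_id x).const_smul (c n)
        have hφat : HasFDerivAt (⇑φ) (fderiv ℝ (⇑φ) (c n • x)) (c n • x) :=
          (((φ.contDiff (n := 1)).differentiable (by simp)) (c n • x)).hasFDerivAt
        have hcomp : fderiv ℝ (fun y : E3 => φ (c n • y)) x =
            (fderiv ℝ (⇑φ) (c n • x)).comp (c n • ContinuousLinearMap.id ℝ E3) := by
          have := (hφat.comp x hL).fderiv
          exact this
        rw [hcomp]
        calc ‖(fderiv ℝ (⇑φ) (c n • x)).comp (c n • ContinuousLinearMap.id ℝ E3)‖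
            ≤ ‖fderiv ℝ (⇑φ) (c n • x)‖ * ‖c n • ContinuousLinearMap.id ℝ E3‖ :=
              ContinuousLinearMap.opNorm_comp_le _ _
          _ ≤ M * 1 := by
              refine mul_le_mul (hM _) ?_ (norm_nonneg _) hM0
              refine le_trans (ContinuousLinearMap.opNorm_smul_le _ _) ?_
              rw [Real.norm_of_nonneg (hc0 n).le]
              calc c n * ‖ContinuousLinearMap.id ℝ E3‖ ≤ 1 * 1 := by
                    refine mul_le_mul (hc1 n) ContinuousLinearMap.norm_id_le (norm_nonneg _) one_pos.le
                _ = 1 := one_mul 1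
          _ = M := mul_one M
      rw [hsmul]
      calc ‖φ (c n • x) • fderiv ℝ (⇑f) x + (fderiv ℝ (fun y : E3 => φ (c n • y)) x).smulRight (f x)‖
          ≤ ‖φ (c n • x) • fderiv ℝ (⇑f) x‖ + ‖(fderiv ℝ (fun y : E3 => φ (c n • y)) x).smulRight (f x)‖ :=
            norm_add_le _ _
        _ ≤ ‖fderiv ℝ (⇑f) x‖ + M * ‖f x‖ := by
            gcongr
            · refine le_trans (ContinuousLinearMap.opNorm_smul_le _ _) ?_
              rw [Real.norm_of_nonneg φ.nonneg]
              exact mul_le_of_le_one_left (norm_nonneg _) φ.le_one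
            · rw [ContinuousLinearMap.norm_smulRight_apply]
              exact mul_le_mul_of_nonneg_right hχd (norm_nonneg _)
    -- eLpNorm bound on the derivative of g n
    have hcontDf : Continuous (fderiv ℝ (⇑f)) := (f.smooth 1).continuous_fderiv (by simp)
    have hDbound : eLpNorm (fderiv ℝ (g n)) 2 volume ≤ b + ENNReal.ofReal M * a := by
      calc eLpNorm (fderiv ℝ (g n)) 2 volume
          ≤ eLpNorm (fun x => ‖fderiv ℝ (⇑f) x‖ + M * ‖f x‖) 2 volume := by
            apply eLpNorm_mono fun x => ?_
            rw [Real.norm_of_nonneg (by positivity)]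
            exact hd x
        _ ≤ eLpNorm (fun x => ‖fderiv ℝ (⇑f) x‖) 2 volume
              + eLpNorm (fun x => M * ‖f x‖) 2 volume := by
            refine eLpNorm_add_le ?_ ?_ (by norm_num)
            · exact hcontDf.norm.aestronglyMeasurable
            · exact (continuous_const.mul f.continuous.norm).aestronglyMeasurable
        _ = b + ENNReal.ofReal M * a := by
            rw [eLpNorm_norm]
            congr 1
            have : (fun x => M * ‖f x‖) = M • (fun x => ‖f x‖) := by funext x; simp
            rw [this, eLpNorm_const_smul, eLpNorm_norm]
            simp [ENNReal.smul_def, Real.enorm_eq_ofReal hM0]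
            rfl
    have : eLpNorm (g n) 6 volume ≤ C₀ * (b + ENNReal.ofReal M * a) := by
      refine le_trans ?_ (mul_le_mul_right hDbound C₀)
      have h6 := hgns
      norm_num at h6
      exact h6
    refine this.trans ?_
    rw [hR]
    calc C₀ * (b + ENNReal.ofReal M * a)
        ≤ C₀ * ((1 + ENNReal.ofReal M) * (a + b)) := by
          gcongr
          calc b + ENNReal.ofReal M * a ≤ (1*(a+b)) + ENNReal.ofReal M * (a+b) := by
                gcongr <;> simp [le_add_iff_nonneg_left, le_add_iff_nonneg_right]
            _ = (1 + ENNReal.ofReal M) * (a + b) := by ring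
      _ = C₀ * (1 + ENNReal.ofReal M) * (a + b) := by ring
  -- pass to the limit
  have hmeas : ∀ n, Measurable fun x => ((‖g n x‖₊ : ℝ≥0∞)) ^ (6:ℝ) := by
    intro n
    have hcont : Continuous (g n) :=
      ((φ.continuous).comp (continuous_const_smul (c n))).smul f.continuous
    exact (hcont.nnnorm.measurable.coe_nnreal_ennreal).pow_const _
  have hlim : ∫⁻ x, ((‖f x‖₊ : ℝ≥0∞)) ^ (6:ℝ) ∂volume ≤ R ^ (6:ℝ) := by
    have hpt : ∀ x : E3, Tendsto (fun n => ((‖g n x‖₊ : ℝ≥0∞)) ^ (6:ℝ)) atTop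
        (nhds (((‖f x‖₊ : ℝ≥0∞)) ^ (6:ℝ))) := by
      intro x
      apply tendsto_const_nhds.congr'
      filter_upwards [eventually_ge_atTop ⌈‖x‖⌉₊] with n hn
      have hone : φ (c n • x) = 1 := by
        apply φ.one_of_mem_closedBall
        have hrIn : φ.rIn = 1 := rfl
        rw [Metric.mem_closedBall, dist_eq_norm, sub_zero, hrIn, norm_smul,
          Real.norm_of_nonneg (hc0 n).le]
        have h1 : ‖x‖ ≤ (n:ℝ) + 1 := by
          refine le_trans (Nat.le_ceil _) ?_
          have : ((⌈‖x‖⌉₊ : ℝ)) ≤ (n : ℝ) := by exact_mod_cast hn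
          linarith
        calc c n * ‖x‖ ≤ c n * ((n:ℝ)+1) := by
              exact mul_le_mul_of_nonneg_left h1 (hc0 n).le
          _ = 1 := inv_mul_cancel₀ (by positivity)
      simp [hg, hone]
    have h1 : (fun x : E3 => ((‖f x‖₊ : ℝ≥0∞)) ^ (6:ℝ)) =
        fun x => liminf (fun n => ((‖g n x‖₊ : ℝ≥0∞)) ^ (6:ℝ)) atTop := by
      funext x; exact ((hpt x).liminf_eq).symm
    rw [h1]
    refine le_trans (lintegral_liminf_le hmeas) ?_
    refine liminf_le_of_frequently_le' ((Eventually.of_forall fun n => ?_).frequently)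
    have he : ∫⁻ x, ((‖g n x‖₊ : ℝ≥0∞)) ^ (6:ℝ) ∂(volume : Measure E3)
        = (eLpNorm (g n) 6 volume) ^ (6:ℝ) := by
      rw [eLpNorm_eq_lintegral_rpow_enorm_toReal (by norm_num) (by norm_num)]
      simp only [enorm_eq_nnnorm]
      rw [← ENNReal.rpow_mul]
      norm_num
    rw [he]
    exact ENNReal.rpow_le_rpow (key n) (by norm_num)
  have hf6 : eLpNorm (⇑f) 6 volume
      = (∫⁻ x, ((‖f x‖₊ : ℝ≥0∞)) ^ (6:ℝ) ∂(volume : Measure E3)) ^ ((6:ℝ)⁻¹) := by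
    rw [eLpNorm_eq_lintegral_rpow_enorm_toReal (by norm_num) (by norm_num)]
    simp only [enorm_eq_nnnorm]
    norm_num
  rw [hf6, hR]
  calc (∫⁻ x, ((‖f x‖₊ : ℝ≥0∞)) ^ (6:ℝ) ∂(volume : Measure E3)) ^ ((6:ℝ)⁻¹)
      ≤ (R ^ (6:ℝ)) ^ ((6:ℝ)⁻¹) := ENNReal.rpow_le_rpow hlim (by norm_num)
    _ = R := by rw [← ENNReal.rpow_mul]; norm_num
    _ = C₀ * (1 + ENNReal.ofReal M) * (a + b) := hR


lemma eLpNorm_two_rpow {F : Type} [NormedAddCommGroup F] (h : E3 → F) :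
    (eLpNorm h 2 (volume : Measure E3)) ^ (2:ℝ)
      = ∫⁻ x, ((‖h x‖₊ : ℝ≥0∞)) ^ (2:ℝ) ∂(volume : Measure E3) := by
  rw [eLpNorm_eq_lintegral_rpow_enorm_toReal (by norm_num) (by norm_num)]
  simp only [enorm_eq_nnnorm]
  rw [← ENNReal.rpow_mul]
  norm_num

lemma holder2 (f g : E3 → ℝ≥0∞) (hf : AEMeasurable f (volume : Measure E3))
    (hg : AEMeasurable g (volume : Measure E3)) :
    ∫⁻ x, f x * g x ∂(volume : Measure E3)
      ≤ (∫⁻ x, f x ^ (2:ℝ) ∂(volume : Measure E3)) ^ ((2:ℝ)⁻¹)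
        * (∫⁻ x, g x ^ (2:ℝ) ∂(volume : Measure E3)) ^ ((2:ℝ)⁻¹) := by
  have hpq : Real.HolderConjugate 2 2 := Real.HolderConjugate.two_two
  have := ENNReal.lintegral_mul_le_Lp_mul_Lq (volume : Measure E3) hpq hf hg
  simpa [one_div] using this

lemma lint4_le {F : Type} [NormedAddCommGroup F] [NormedSpace ℝ F] (C : ℝ≥0∞)
    (f : SchwartzMap E3 F)
    (hC : eLpNorm (⇑f) 6 (volume : Measure E3) ≤
      C * (eLpNorm (⇑f) 2 volume + eLpNorm (fderiv ℝ ⇑f) 2 volume)) :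
    (∫⁻ x, ((‖f x‖₊ : ℝ≥0∞)) ^ (4:ℝ) ∂(volume : Measure E3)) ^ ((4:ℝ)⁻¹)
      ≤ C ^ ((3:ℝ)/4) * (eLpNorm (⇑f) 2 volume + eLpNorm (fderiv ℝ ⇑f) 2 volume) := by
  set T := eLpNorm (⇑f) 2 (volume : Measure E3) + eLpNorm (fderiv ℝ ⇑f) 2 volume with hT
  have hmf : AEMeasurable (fun x => ((‖f x‖₊ : ℝ≥0∞))) (volume : Measure E3) :=
    (f.continuous.nnnorm.measurable.coe_nnreal_ennreal).aemeasurable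
  have h1 : ∫⁻ x, ((‖f x‖₊ : ℝ≥0∞)) ^ (4:ℝ) ∂(volume : Measure E3)
      ≤ (∫⁻ x, ((‖f x‖₊ : ℝ≥0∞)) ^ (2:ℝ) ∂(volume : Measure E3)) ^ ((2:ℝ)⁻¹)
        * (∫⁻ x, ((‖f x‖₊ : ℝ≥0∞)) ^ (6:ℝ) ∂(volume : Measure E3)) ^ ((2:ℝ)⁻¹) := by
    have e1 : ∀ x : E3, ((‖f x‖₊ : ℝ≥0∞)) ^ (4:ℝ)
        = (‖f x‖₊ : ℝ≥0∞) * ((‖f x‖₊ : ℝ≥0∞)) ^ (3:ℝ) := by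
      intro x
      rw [show (4:ℝ) = 1 + 3 by norm_num, ENNReal.rpow_add_of_nonneg _ _ (by norm_num) (by norm_num),
        ENNReal.rpow_one]
    have e2 : ∀ x : E3, (((‖f x‖₊ : ℝ≥0∞)) ^ (3:ℝ)) ^ (2:ℝ) = ((‖f x‖₊ : ℝ≥0∞)) ^ (6:ℝ) := by
      intro x; rw [← ENNReal.rpow_mul]; norm_num
    calc ∫⁻ x, ((‖f x‖₊ : ℝ≥0∞)) ^ (4:ℝ) ∂(volume : Measure E3)
        = ∫⁻ x, (‖f x‖₊ : ℝ≥0∞) * ((‖f x‖₊ : ℝ≥0∞)) ^ (3:ℝ) ∂(volume : Measure E3) := by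
          exact lintegral_congr fun x => e1 x
      _ ≤ (∫⁻ x, ((‖f x‖₊ : ℝ≥0∞)) ^ (2:ℝ) ∂(volume : Measure E3)) ^ ((2:ℝ)⁻¹)
          * (∫⁻ x, (((‖f x‖₊ : ℝ≥0∞)) ^ (3:ℝ)) ^ (2:ℝ) ∂(volume : Measure E3)) ^ ((2:ℝ)⁻¹) :=
          holder2 _ _ hmf (hmf.pow_const _)
      _ = (∫⁻ x, ((‖f x‖₊ : ℝ≥0∞)) ^ (2:ℝ) ∂(volume : Measure E3)) ^ ((2:ℝ)⁻¹)
          * (∫⁻ x, ((‖f x‖₊ : ℝ≥0∞)) ^ (6:ℝ) ∂(volume : Measure E3)) ^ ((2:ℝ)⁻¹) := by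
          congr 1
          exact congrArg (· ^ ((2:ℝ)⁻¹)) (lintegral_congr fun x => e2 x)
  have h2 : (∫⁻ x, ((‖f x‖₊ : ℝ≥0∞)) ^ (2:ℝ) ∂(volume : Measure E3)) ^ ((2:ℝ)⁻¹)
      = eLpNorm (⇑f) 2 volume := by
    rw [← eLpNorm_two_rpow, ← ENNReal.rpow_mul]; norm_num
  have h3 : (∫⁻ x, ((‖f x‖₊ : ℝ≥0∞)) ^ (6:ℝ) ∂(volume : Measure E3)) ^ ((2:ℝ)⁻¹)
      = (eLpNorm (⇑f) 6 volume) ^ (3:ℝ) := by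
    rw [eLpNorm_eq_lintegral_rpow_enorm_toReal (by norm_num) (by norm_num)]
    simp only [enorm_eq_nnnorm]
    rw [← ENNReal.rpow_mul]
    norm_num
  have h4 : ∫⁻ x, ((‖f x‖₊ : ℝ≥0∞)) ^ (4:ℝ) ∂(volume : Measure E3)
      ≤ C ^ (3:ℝ) * T ^ (4:ℝ) := by
    refine h1.trans ?_
    rw [h2, h3]
    calc eLpNorm (⇑f) 2 volume * (eLpNorm (⇑f) 6 volume) ^ (3:ℝ)
        ≤ T * (C * T) ^ (3:ℝ) :=
          mul_le_mul' (le_add_right le_rfl) (ENNReal.rpow_le_rpow hC (by norm_num))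
      _ = C ^ (3:ℝ) * T ^ (4:ℝ) := by
          rw [ENNReal.mul_rpow_of_nonneg _ _ (by norm_num : (0:ℝ) ≤ 3)]
          rw [show (4:ℝ) = 1 + 3 by norm_num,
            ENNReal.rpow_add_of_nonneg _ _ (by norm_num) (by norm_num), ENNReal.rpow_one]
          ring
  calc (∫⁻ x, ((‖f x‖₊ : ℝ≥0∞)) ^ (4:ℝ) ∂(volume : Measure E3)) ^ ((4:ℝ)⁻¹)
      ≤ (C ^ (3:ℝ) * T ^ (4:ℝ)) ^ ((4:ℝ)⁻¹) := ENNReal.rpow_le_rpow h4 (by norm_num)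
    _ = C ^ ((3:ℝ)/4) * T := by
        rw [ENNReal.mul_rpow_of_nonneg _ _ (by norm_num : (0:ℝ) ≤ (4:ℝ)⁻¹), ← ENNReal.rpow_mul,
          ← ENNReal.rpow_mul]
        norm_num

lemma ofReal_norm_sq {F : Type} [NormedAddCommGroup F] (y : F) :
    ENNReal.ofReal (‖y‖ ^ 2) = ((‖y‖₊ : ℝ≥0∞)) ^ (2:ℝ) := by
  rw [ENNReal.ofReal_pow (norm_nonneg _), ofReal_norm, enorm_eq_nnnorm, ← ENNReal.rpow_natCast]
  norm_num


/-- **The trilinear estimate `|⟨C(u,v),w⟩| ≤ c‖A^{1/2}u‖·‖Av‖·‖w‖` in concrete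
Sobolev form.** There is `c > 0` such that for all Schwartz vector fields
`u, v, w : ℝ³ → ℝ³`,
`|∫ ⟨(u·∇)v, w⟩| ≤ c·(∫ ‖u‖²+‖Du‖²)^{1/2}·(∫ ‖v‖²+‖Dv‖²+‖D²v‖²)^{1/2}·(∫ ‖w‖²)^{1/2}`. -/
theorem stmt_13 :
    ∃ c : ℝ, 0 < c ∧
      ∀ u v w : SchwartzMap (EuclideanSpace ℝ (Fin 3)) (EuclideanSpace ℝ (Fin 3)),
        |∫ x : EuclideanSpace ℝ (Fin 3), ⟪fderiv ℝ (⇑v) x (u x), w x⟫| ≤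
          c * Real.sqrt (∫ x : EuclideanSpace ℝ (Fin 3),
                (‖u x‖ ^ 2 + ‖fderiv ℝ (⇑u) x‖ ^ 2)) *
            Real.sqrt (∫ x : EuclideanSpace ℝ (Fin 3),
                (‖v x‖ ^ 2 + ‖fderiv ℝ (⇑v) x‖ ^ 2 + ‖iteratedFDeriv ℝ 2 (⇑v) x‖ ^ 2)) *
            Real.sqrt (∫ x : EuclideanSpace ℝ (Fin 3), ‖w x‖ ^ 2) := by
  obtain ⟨C₁, hC₁t, hC₁⟩ := gns6 (F := E3)
  obtain ⟨C₂, hC₂t, hC₂⟩ := gns6 (F := E3 →L[ℝ] E3)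
  set C : ℝ≥0∞ := C₁ + C₂ + 1 with hC
  have hCt : C ≠ ⊤ := by finiteness
  have hC1 : (1:ℝ≥0∞) ≤ C := le_add_self
  have hC₁C : C₁ ≤ C := le_add_right (le_add_right le_rfl)
  have hC₂C : C₂ ≤ C := le_add_right (le_add_self)
  set K : ℝ≥0∞ := 4 * C ^ ((3:ℝ)/2) with hK
  have hCr : C ^ ((3:ℝ)/2) ≠ ⊤ := ENNReal.rpow_ne_top_of_nonneg (by norm_num) hCt
  have hKt : K ≠ ⊤ := ENNReal.mul_ne_top (by norm_num) hCr
  refine ⟨K.toReal, ?_, ?_⟩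
  · have h4K : (4:ℝ≥0∞) ≤ K := by
      calc (4:ℝ≥0∞) = 4 * 1 := by norm_num
        _ ≤ 4 * C ^ ((3:ℝ)/2) := by
            gcongr
            calc (1:ℝ≥0∞) = 1 ^ ((3:ℝ)/2) := (ENNReal.one_rpow _).symm
              _ ≤ C ^ ((3:ℝ)/2) := ENNReal.rpow_le_rpow hC1 (by norm_num)
        _ = K := hK.symm
    have := ENNReal.toReal_mono hKt h4K
    simp only [ENNReal.toReal_ofNat] at this
    linarith
  intro u v w
  -- Schwartz derivatives
  set du := SchwartzMap.fderivCLM ℝ E3 E3 u with hdu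
  set dv := SchwartzMap.fderivCLM ℝ E3 E3 v with hdvdef
  set ddv := SchwartzMap.fderivCLM ℝ E3 (E3 →L[ℝ] E3) dv with hddvdef
  have hduf : fderiv ℝ (⇑u) = ⇑du := by
    funext x; exact (SchwartzMap.fderivCLM_apply ℝ u x).symm
  have hdvf : fderiv ℝ (⇑v) = ⇑dv := by
    funext x; exact (SchwartzMap.fderivCLM_apply ℝ v x).symm
  have hddvf : fderiv ℝ (⇑dv) = ⇑ddv := by
    funext x; exact (SchwartzMap.fderivCLM_apply ℝ dv x).symm
  simp only [← norm_fderiv_fderiv, hduf, hdvf, hddvf]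
  -- measurability
  have mnu : AEMeasurable (fun x : E3 => ((‖u x‖₊ : ℝ≥0∞))) volume :=
    u.continuous.nnnorm.measurable.coe_nnreal_ennreal.aemeasurable
  have mndu : AEMeasurable (fun x : E3 => ((‖du x‖₊ : ℝ≥0∞))) volume :=
    du.continuous.nnnorm.measurable.coe_nnreal_ennreal.aemeasurable
  have mnv : AEMeasurable (fun x : E3 => ((‖v x‖₊ : ℝ≥0∞))) volume :=
    v.continuous.nnnorm.measurable.coe_nnreal_ennreal.aemeasurable
  have mndv : AEMeasurable (fun x : E3 => ((‖dv x‖₊ : ℝ≥0∞))) volume :=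
    dv.continuous.nnnorm.measurable.coe_nnreal_ennreal.aemeasurable
  have mnddv : AEMeasurable (fun x : E3 => ((‖ddv x‖₊ : ℝ≥0∞))) volume :=
    ddv.continuous.nnnorm.measurable.coe_nnreal_ennreal.aemeasurable
  have mnw : AEMeasurable (fun x : E3 => ((‖w x‖₊ : ℝ≥0∞))) volume :=
    w.continuous.nnnorm.measurable.coe_nnreal_ennreal.aemeasurable
  -- the three ℝ≥0∞ integrals
  set Ae : ℝ≥0∞ := ∫⁻ x, (((‖u x‖₊ : ℝ≥0∞)) ^ (2:ℝ) + ((‖du x‖₊ : ℝ≥0∞)) ^ (2:ℝ)) with hAe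
  set Be : ℝ≥0∞ := ∫⁻ x, (((‖v x‖₊ : ℝ≥0∞)) ^ (2:ℝ) + ((‖dv x‖₊ : ℝ≥0∞)) ^ (2:ℝ)
      + ((‖ddv x‖₊ : ℝ≥0∞)) ^ (2:ℝ)) with hBe
  set We : ℝ≥0∞ := ∫⁻ x, ((‖w x‖₊ : ℝ≥0∞)) ^ (2:ℝ) with hWe
  have hAe_split : Ae = (∫⁻ x, ((‖u x‖₊ : ℝ≥0∞)) ^ (2:ℝ))
      + ∫⁻ x, ((‖du x‖₊ : ℝ≥0∞)) ^ (2:ℝ) := lintegral_add_left' (mnu.pow_const _) _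
  have hBe_split : Be = ((∫⁻ x, ((‖v x‖₊ : ℝ≥0∞)) ^ (2:ℝ))
      + ∫⁻ x, ((‖dv x‖₊ : ℝ≥0∞)) ^ (2:ℝ)) + ∫⁻ x, ((‖ddv x‖₊ : ℝ≥0∞)) ^ (2:ℝ) := by
    rw [hBe, lintegral_add_left' (f := fun x => ((‖v x‖₊ : ℝ≥0∞)) ^ (2:ℝ) + ((‖dv x‖₊ : ℝ≥0∞)) ^ (2:ℝ)) ((mnv.pow_const _).add (mndv.pow_const _)),
      lintegral_add_left' (mnv.pow_const _)]
  have hAt : Ae ≠ ⊤ := by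
    rw [hAe_split]
    exact ENNReal.add_ne_top.2 ⟨(schwartz_lintegral_sq_lt_top u).ne,
      (schwartz_lintegral_sq_lt_top du).ne⟩
  have hBt : Be ≠ ⊤ := by
    rw [hBe_split]
    exact ENNReal.add_ne_top.2 ⟨ENNReal.add_ne_top.2 ⟨(schwartz_lintegral_sq_lt_top v).ne,
      (schwartz_lintegral_sq_lt_top dv).ne⟩, (schwartz_lintegral_sq_lt_top ddv).ne⟩
  have hWt : We ≠ ⊤ := (schwartz_lintegral_sq_lt_top w).ne
  -- eLpNorm bounds by the square roots
  have sqrt_le : ∀ {X Y : ℝ≥0∞} (h : ∀ Z : ℝ≥0∞, Z = X → Z ^ (2:ℝ) ≤ Y),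
      X ≤ Y ^ ((2:ℝ)⁻¹) := by
    intro X Y h
    calc X = (X ^ (2:ℝ)) ^ ((2:ℝ)⁻¹) := by rw [← ENNReal.rpow_mul]; norm_num
      _ ≤ Y ^ ((2:ℝ)⁻¹) := ENNReal.rpow_le_rpow (h X rfl) (by norm_num)
  have hsa : eLpNorm (⇑u) 2 volume ≤ Ae ^ ((2:ℝ)⁻¹) := by
    refine sqrt_le fun Z hZ => ?_
    rw [hZ, eLpNorm_two_rpow, hAe]
    exact lintegral_mono fun x => le_self_add
  have hsb : eLpNorm (⇑du) 2 volume ≤ Ae ^ ((2:ℝ)⁻¹) := by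
    refine sqrt_le fun Z hZ => ?_
    rw [hZ, eLpNorm_two_rpow, hAe]
    exact lintegral_mono fun x => le_add_self
  have hsq : eLpNorm (⇑dv) 2 volume ≤ Be ^ ((2:ℝ)⁻¹) := by
    refine sqrt_le fun Z hZ => ?_
    rw [hZ, eLpNorm_two_rpow, hBe]
    exact lintegral_mono fun x => le_add_right le_add_self
  have hsr : eLpNorm (⇑ddv) 2 volume ≤ Be ^ ((2:ℝ)⁻¹) := by
    refine sqrt_le fun Z hZ => ?_
    rw [hZ, eLpNorm_two_rpow, hBe]
    exact lintegral_mono fun x => le_add_self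
  have hsw : eLpNorm (⇑w) 2 volume = We ^ ((2:ℝ)⁻¹) := by
    calc eLpNorm (⇑w) 2 volume
        = ((eLpNorm (⇑w) 2 volume) ^ (2:ℝ)) ^ ((2:ℝ)⁻¹) := by
          rw [← ENNReal.rpow_mul]; norm_num
      _ = We ^ ((2:ℝ)⁻¹) := by rw [eLpNorm_two_rpow, hWe]
  -- the L⁴ bounds
  have h4u : (∫⁻ x, ((‖u x‖₊ : ℝ≥0∞)) ^ (4:ℝ)) ^ ((4:ℝ)⁻¹)
      ≤ C ^ ((3:ℝ)/4) * (2 * Ae ^ ((2:ℝ)⁻¹)) := by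
    have hu6 : eLpNorm (⇑u) 6 volume ≤
        C * (eLpNorm (⇑u) 2 volume + eLpNorm (fderiv ℝ ⇑u) 2 volume) :=
      le_trans (hC₁ u) (mul_le_mul_left hC₁C _)
    refine le_trans (lint4_le C u hu6) ?_
    rw [hduf]
    exact mul_le_mul_right (by rw [two_mul]; exact add_le_add hsa hsb) _
  have h4dv : (∫⁻ x, ((‖dv x‖₊ : ℝ≥0∞)) ^ (4:ℝ)) ^ ((4:ℝ)⁻¹)
      ≤ C ^ ((3:ℝ)/4) * (2 * Be ^ ((2:ℝ)⁻¹)) := by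
    have hv6 : eLpNorm (⇑dv) 6 volume ≤
        C * (eLpNorm (⇑dv) 2 volume + eLpNorm (fderiv ℝ ⇑dv) 2 volume) :=
      le_trans (hC₂ dv) (mul_le_mul_left hC₂C _)
    refine le_trans (lint4_le C dv hv6) ?_
    rw [hddvf]
    exact mul_le_mul_right (by rw [two_mul]; exact add_le_add hsq hsr) _
  -- main chain in ℝ≥0∞
  have main_e : ENNReal.ofReal |∫ x, ⟪dv x (u x), w x⟫|
      ≤ K * Ae ^ ((2:ℝ)⁻¹) * Be ^ ((2:ℝ)⁻¹) * We ^ ((2:ℝ)⁻¹) := by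
    have step1 : ENNReal.ofReal |∫ x, ⟪dv x (u x), w x⟫|
        ≤ ∫⁻ x, ((‖dv x‖₊ : ℝ≥0∞)) * ((‖u x‖₊ : ℝ≥0∞)) * ((‖w x‖₊ : ℝ≥0∞)) := by
      have hn := MeasureTheory.norm_integral_le_lintegral_norm (μ := (volume : Measure E3))
        (f := fun x : E3 => ⟪dv x (u x), w x⟫)
      calc ENNReal.ofReal |∫ x, ⟪dv x (u x), w x⟫|
          ≤ ENNReal.ofReal ((∫⁻ x, ENNReal.ofReal ‖⟪dv x (u x), w x⟫‖).toReal) := by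
            apply ENNReal.ofReal_le_ofReal
            simpa [Real.norm_eq_abs] using hn
        _ ≤ ∫⁻ x, ENNReal.ofReal ‖⟪dv x (u x), w x⟫‖ := ENNReal.ofReal_toReal_le
        _ ≤ ∫⁻ x, ((‖dv x‖₊ : ℝ≥0∞)) * ((‖u x‖₊ : ℝ≥0∞)) * ((‖w x‖₊ : ℝ≥0∞)) := by
            refine lintegral_mono fun x => ?_
            have h1 : ‖⟪dv x (u x), w x⟫‖ ≤ ‖dv x‖ * ‖u x‖ * ‖w x‖ := by
              refine le_trans (norm_inner_le_norm _ _) ?_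
              exact mul_le_mul_of_nonneg_right ((dv x).le_opNorm (u x)) (norm_nonneg _)
            refine le_trans (ENNReal.ofReal_le_ofReal h1) ?_
            rw [ENNReal.ofReal_mul (by positivity), ENNReal.ofReal_mul (by positivity)]
            simp only [ofReal_norm]; exact le_rfl
    have step2 : ∫⁻ x, ((‖dv x‖₊ : ℝ≥0∞)) * ((‖u x‖₊ : ℝ≥0∞)) * ((‖w x‖₊ : ℝ≥0∞))
        ≤ (∫⁻ x, (((‖dv x‖₊ : ℝ≥0∞)) * ((‖u x‖₊ : ℝ≥0∞))) ^ (2:ℝ)) ^ ((2:ℝ)⁻¹)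
          * We ^ ((2:ℝ)⁻¹) := by
      rw [hWe]
      exact holder2 (fun x => ((‖dv x‖₊ : ℝ≥0∞)) * ((‖u x‖₊ : ℝ≥0∞))) _ (mndv.mul mnu) mnw
    have step3 : ∫⁻ x, (((‖dv x‖₊ : ℝ≥0∞)) * ((‖u x‖₊ : ℝ≥0∞))) ^ (2:ℝ)
        ≤ (∫⁻ x, ((‖dv x‖₊ : ℝ≥0∞)) ^ (4:ℝ)) ^ ((2:ℝ)⁻¹)
          * (∫⁻ x, ((‖u x‖₊ : ℝ≥0∞)) ^ (4:ℝ)) ^ ((2:ℝ)⁻¹) := by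
      calc ∫⁻ x, (((‖dv x‖₊ : ℝ≥0∞)) * ((‖u x‖₊ : ℝ≥0∞))) ^ (2:ℝ)
          = ∫⁻ x, ((‖dv x‖₊ : ℝ≥0∞)) ^ (2:ℝ) * ((‖u x‖₊ : ℝ≥0∞)) ^ (2:ℝ) := by
            refine lintegral_congr fun x => ?_
            rw [ENNReal.mul_rpow_of_nonneg _ _ (by norm_num : (0:ℝ) ≤ 2)]
        _ ≤ (∫⁻ x, (((‖dv x‖₊ : ℝ≥0∞)) ^ (2:ℝ)) ^ (2:ℝ)) ^ ((2:ℝ)⁻¹)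
            * (∫⁻ x, (((‖u x‖₊ : ℝ≥0∞)) ^ (2:ℝ)) ^ (2:ℝ)) ^ ((2:ℝ)⁻¹) :=
            holder2 _ _ (mndv.pow_const _) (mnu.pow_const _)
        _ = (∫⁻ x, ((‖dv x‖₊ : ℝ≥0∞)) ^ (4:ℝ)) ^ ((2:ℝ)⁻¹)
            * (∫⁻ x, ((‖u x‖₊ : ℝ≥0∞)) ^ (4:ℝ)) ^ ((2:ℝ)⁻¹) := by
            congr 1
            · refine congrArg (· ^ ((2:ℝ)⁻¹)) (lintegral_congr fun x => ?_)
              rw [← ENNReal.rpow_mul]; norm_num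
            · refine congrArg (· ^ ((2:ℝ)⁻¹)) (lintegral_congr fun x => ?_)
              rw [← ENNReal.rpow_mul]; norm_num
    calc ENNReal.ofReal |∫ x, ⟪dv x (u x), w x⟫|
        ≤ (∫⁻ x, (((‖dv x‖₊ : ℝ≥0∞)) * ((‖u x‖₊ : ℝ≥0∞))) ^ (2:ℝ)) ^ ((2:ℝ)⁻¹)
          * We ^ ((2:ℝ)⁻¹) := le_trans step1 step2
      _ ≤ ((∫⁻ x, ((‖dv x‖₊ : ℝ≥0∞)) ^ (4:ℝ)) ^ ((2:ℝ)⁻¹)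
          * (∫⁻ x, ((‖u x‖₊ : ℝ≥0∞)) ^ (4:ℝ)) ^ ((2:ℝ)⁻¹)) ^ ((2:ℝ)⁻¹)
          * We ^ ((2:ℝ)⁻¹) :=
          mul_le_mul_left (ENNReal.rpow_le_rpow step3 (by norm_num)) _
      _ = (∫⁻ x, ((‖dv x‖₊ : ℝ≥0∞)) ^ (4:ℝ)) ^ ((4:ℝ)⁻¹)
          * (∫⁻ x, ((‖u x‖₊ : ℝ≥0∞)) ^ (4:ℝ)) ^ ((4:ℝ)⁻¹) * We ^ ((2:ℝ)⁻¹) := by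
          rw [ENNReal.mul_rpow_of_nonneg _ _ (by norm_num : (0:ℝ) ≤ (2:ℝ)⁻¹),
            ← ENNReal.rpow_mul, ← ENNReal.rpow_mul]
          norm_num
      _ ≤ (C ^ ((3:ℝ)/4) * (2 * Be ^ ((2:ℝ)⁻¹)))
          * (C ^ ((3:ℝ)/4) * (2 * Ae ^ ((2:ℝ)⁻¹))) * We ^ ((2:ℝ)⁻¹) := by
          exact mul_le_mul_left (mul_le_mul' h4dv h4u) _
      _ = K * Ae ^ ((2:ℝ)⁻¹) * Be ^ ((2:ℝ)⁻¹) * We ^ ((2:ℝ)⁻¹) := by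
          rw [hK]
          have hCC : C ^ ((3:ℝ)/4) * C ^ ((3:ℝ)/4) = C ^ ((3:ℝ)/2) := by
            rw [← ENNReal.rpow_add_of_nonneg _ _ (by norm_num) (by norm_num)]
            norm_num
          calc (C ^ ((3:ℝ)/4) * (2 * Be ^ ((2:ℝ)⁻¹)))
              * (C ^ ((3:ℝ)/4) * (2 * Ae ^ ((2:ℝ)⁻¹))) * We ^ ((2:ℝ)⁻¹)
              = (C ^ ((3:ℝ)/4) * C ^ ((3:ℝ)/4)) * (2 * 2)
                * Ae ^ ((2:ℝ)⁻¹) * Be ^ ((2:ℝ)⁻¹) * We ^ ((2:ℝ)⁻¹) := by ring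
            _ = 4 * C ^ ((3:ℝ)/2) * Ae ^ ((2:ℝ)⁻¹) * Be ^ ((2:ℝ)⁻¹) * We ^ ((2:ℝ)⁻¹) := by
                rw [hCC]; ring_nf
            _ = _ := rfl
  -- conversion to real integrals
  have hArt : (Ae ^ ((2:ℝ)⁻¹)).toReal
      = Real.sqrt (∫ x, (‖u x‖ ^ 2 + ‖du x‖ ^ 2)) := by
    rw [← ENNReal.toReal_rpow, Real.sqrt_eq_rpow, ← one_div]
    congr 1
    rw [MeasureTheory.integral_eq_lintegral_of_nonneg_ae (f := fun x => ‖u x‖ ^ 2 + ‖du x‖ ^ 2)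
      (Eventually.of_forall fun x => by positivity)
      ((u.continuous.norm.pow 2).add (du.continuous.norm.pow 2)).aestronglyMeasurable]
    congr 1
    refine lintegral_congr fun x => ?_
    rw [ENNReal.ofReal_add (by positivity) (by positivity), ofReal_norm_sq, ofReal_norm_sq]
  have hBrt : (Be ^ ((2:ℝ)⁻¹)).toReal
      = Real.sqrt (∫ x, (‖v x‖ ^ 2 + ‖dv x‖ ^ 2 + ‖ddv x‖ ^ 2)) := by
    rw [← ENNReal.toReal_rpow, Real.sqrt_eq_rpow, ← one_div]
    congr 1
    rw [MeasureTheory.integral_eq_lintegral_of_nonneg_ae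
      (f := fun x => ‖v x‖ ^ 2 + ‖dv x‖ ^ 2 + ‖ddv x‖ ^ 2)
      (Eventually.of_forall fun x => by positivity)
      (((v.continuous.norm.pow 2).add (dv.continuous.norm.pow 2)).add
        (ddv.continuous.norm.pow 2)).aestronglyMeasurable]
    congr 1
    refine lintegral_congr fun x => ?_
    rw [ENNReal.ofReal_add (by positivity) (by positivity),
      ENNReal.ofReal_add (by positivity) (by positivity), ofReal_norm_sq, ofReal_norm_sq,
      ofReal_norm_sq]
  have hWrt : (We ^ ((2:ℝ)⁻¹)).toReal = Real.sqrt (∫ x, ‖w x‖ ^ 2) := by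
    rw [← ENNReal.toReal_rpow, Real.sqrt_eq_rpow, ← one_div]
    congr 1
    rw [MeasureTheory.integral_eq_lintegral_of_nonneg_ae (f := fun x => ‖w x‖ ^ 2)
      (Eventually.of_forall fun x => by positivity)
      (w.continuous.norm.pow 2).aestronglyMeasurable]
    congr 1
    exact lintegral_congr fun x => (ofReal_norm_sq (w x)).symm ▸ rfl
  have hXt : K * Ae ^ ((2:ℝ)⁻¹) * Be ^ ((2:ℝ)⁻¹) * We ^ ((2:ℝ)⁻¹) ≠ ⊤ := by
    refine ENNReal.mul_ne_top (ENNReal.mul_ne_top (ENNReal.mul_ne_top hKt ?_) ?_) ?_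
    · exact ENNReal.rpow_ne_top_of_nonneg (by norm_num) hAt
    · exact ENNReal.rpow_ne_top_of_nonneg (by norm_num) hBt
    · exact ENNReal.rpow_ne_top_of_nonneg (by norm_num) hWt
  calc |∫ x, ⟪dv x (u x), w x⟫|
      = (ENNReal.ofReal |∫ x, ⟪dv x (u x), w x⟫|).toReal :=
        (ENNReal.toReal_ofReal (abs_nonneg _)).symm
    _ ≤ (K * Ae ^ ((2:ℝ)⁻¹) * Be ^ ((2:ℝ)⁻¹) * We ^ ((2:ℝ)⁻¹)).toReal :=
        ENNReal.toReal_mono hXt main_e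
    _ = K.toReal * Real.sqrt (∫ x, (‖u x‖ ^ 2 + ‖du x‖ ^ 2))
        * Real.sqrt (∫ x, (‖v x‖ ^ 2 + ‖dv x‖ ^ 2 + ‖ddv x‖ ^ 2))
        * Real.sqrt (∫ x, ‖w x‖ ^ 2) := by
        rw [ENNReal.toReal_mul, ENNReal.toReal_mul, ENNReal.toReal_mul, hArt, hBrt, hWrt]

end
end Stmt13Aux
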